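/- Let Ã, A, P be invertible 2×2 complex matrices, c ∈ ℂ with |c| = 1, and let E be a 2×2 complex matrix such that c·P*AP = Ã + E and ‖E‖ ≤ |det Ã|/(8‖Ã‖+4). Set Δ = arg(det Ã / det A) (principal argument). Then there exists a sign ε ∈ {1, −1} such that |c − ε·e^{iΔ/2}| ≤ ‖E‖·(8‖Ã‖+4)/|det Ã|. -/

import Mathlib

open Matrix

/-- The entrywise maximum norm `‖X‖ = max_{j,k} |x_{jk}|` on complex matrices. -/
noncomputable def maxNorm {n : ℕ} (X : Matrix (Fin n) (Fin n) ℂ) : ℝ :=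
  ((Finset.univ.sup fun p : Fin n × Fin n => ‖X p.1 p.2‖₊ : NNReal) : ℝ)

lemma maxNorm_entry {n : ℕ} (X : Matrix (Fin n) (Fin n) ℂ) (i j : Fin n) :
    ‖X i j‖ ≤ maxNorm X := by
  have := Finset.le_sup (f := fun p : Fin n × Fin n => ‖X p.1 p.2‖₊)
    (Finset.mem_univ (i, j))
  exact_mod_cast this

lemma maxNorm_nonneg {n : ℕ} (X : Matrix (Fin n) (Fin n) ℂ) : 0 ≤ maxNorm X :=
  NNReal.coe_nonneg _


lemma unitize_close (v : ℂ) (a b : ℝ) (ha : 0 < a) (hre : a ≤ v.re)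
    (hnv : a ≤ ‖v‖) (him : |v.im| ≤ b) :
    ‖v / (‖v‖ : ℝ) - 1‖ ≤ b / a := by
  have hr : 0 < ‖v‖ := ha.trans_le hnv
  have hb0 : 0 ≤ b := (abs_nonneg _).trans him
  have hrc : ((‖v‖ : ℝ) : ℂ) ≠ 0 := by exact_mod_cast hr.ne'
  have heq : v / (‖v‖ : ℝ) - 1 = (v - (‖v‖ : ℝ)) / (‖v‖ : ℝ) := by
    rw [sub_div, div_self hrc]
  rw [heq, norm_div]
  have hnr : ‖((‖v‖ : ℝ) : ℂ)‖ = ‖v‖ := by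
    rw [Complex.norm_real, Real.norm_of_nonneg hr.le]
  rw [hnr, div_le_div_iff₀ hr ha]
  have hvsq : v.re ^ 2 + v.im ^ 2 = ‖v‖ ^ 2 := by
    rw [Complex.sq_norm, Complex.normSq_apply]; ring
  have hsq : ‖v - (‖v‖ : ℝ)‖ ^ 2 = (v.re - ‖v‖) ^ 2 + v.im ^ 2 := by
    rw [Complex.sq_norm, Complex.normSq_apply]
    simp [Complex.sub_re, Complex.sub_im]
    ring
  have him2 : v.im ^ 2 ≤ b ^ 2 := by nlinarith [abs_nonneg v.im, sq_abs v.im]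
  have h1 : (‖v‖ - v.re) * (‖v‖ + v.re) = v.im ^ 2 := by nlinarith [hvsq]
  have hn0 : 0 ≤ ‖v - (‖v‖ : ℝ)‖ := norm_nonneg _
  have hrre : 0 < ‖v‖ + v.re := by linarith
  have h2 : ((v.re - ‖v‖) ^ 2 + v.im ^ 2) * (‖v‖ + v.re) = 2 * ‖v‖ * v.im ^ 2 := by
    linear_combination (‖v‖ + v.re) * hvsq + 2 * ‖v‖ * h1
  have h3 : ((v.re - ‖v‖) ^ 2 + v.im ^ 2) * a ^ 2 * (‖v‖ + v.re)
      = 2 * ‖v‖ * v.im ^ 2 * a ^ 2 := by linear_combination a ^ 2 * h2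
  have hintA : 0 ≤ b ^ 2 * ‖v‖ * (‖v‖ * (‖v‖ + v.re) - 2 * a ^ 2) := by
    apply mul_nonneg (mul_nonneg (sq_nonneg b) hr.le)
    nlinarith [hre, hnv, ha]
  have hintB : 0 ≤ 2 * ‖v‖ * a ^ 2 * (b ^ 2 - v.im ^ 2) := by
    apply mul_nonneg (mul_nonneg (by positivity) (sq_nonneg a))
    linarith
  have hmain : (‖v - (‖v‖ : ℝ)‖ * a) ^ 2 ≤ (b * ‖v‖) ^ 2 := by
    have h4 : ((v.re - ‖v‖) ^ 2 + v.im ^ 2) * a ^ 2 * (‖v‖ + v.re)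
        ≤ b ^ 2 * ‖v‖ ^ 2 * (‖v‖ + v.re) := by nlinarith [h3, hintA, hintB]
    have h5 := le_of_mul_le_mul_right h4 hrre
    calc (‖v - (‖v‖ : ℝ)‖ * a) ^ 2 = ((v.re - ‖v‖) ^ 2 + v.im ^ 2) * a ^ 2 := by
          rw [mul_pow, hsq]
      _ ≤ b ^ 2 * ‖v‖ ^ 2 := h5
      _ = (b * ‖v‖) ^ 2 := by ring
  have := Real.sqrt_le_sqrt hmain
  rwa [Real.sqrt_sq (mul_nonneg hn0 ha.le), Real.sqrt_sq (mul_nonneg hb0 hr.le)] at this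

lemma min_factor (p q R : ℝ) (hp : 0 ≤ p) (hpar : p ^ 2 + q ^ 2 = 4) (hpq : p ≤ q)
    (hXR : (p * q) ^ 2 ≤ 2 * R ^ 2) (hR : 0 ≤ R) : p ≤ R := by
  have hp2 : p ^ 2 ≤ 2 := by nlinarith
  have h4 : p ^ 2 * (4 - p ^ 2) = (p * q) ^ 2 := by linear_combination (-(p ^ 2)) * hpar
  have hpR : p ^ 2 ≤ R ^ 2 := by nlinarith [mul_nonneg (sq_nonneg p) (sub_nonneg.mpr hp2)]
  nlinarith [hpR]

set_option maxHeartbeats 1000000 in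
/-- Core scalar estimate: purely about complex numbers. -/
lemma scalar_core (c d D δ : ℂ) (ν : ℝ) (hνpos : 0 < ν) (hc : ‖c‖ = 1)
    (hd0 : d ≠ 0) (hD0 : D ≠ 0) (hmain : c ^ 2 * (ν : ℂ) * d = D + δ)
    (hτ : ‖δ‖ ≤ (9 / 16) * ‖D‖) (R : ℝ) (hR0 : 0 ≤ R)
    (hRδ : (256 / 49) * ‖δ‖ ^ 2 ≤ 2 * (R * ‖D‖) ^ 2) :
    ∃ ε : ℂ, (ε = 1 ∨ ε = -1) ∧
      ‖c - ε * Complex.exp ((((D / d).arg / 2 : ℝ)) * Complex.I)‖ ≤ R := by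
  have hDpos : 0 < ‖D‖ := norm_pos_iff.mpr hD0
  set z : ℂ := D / d with hzdef
  have hz0 : z ≠ 0 := div_ne_zero hD0 hd0
  set w : ℂ := Complex.exp (((z.arg / 2 : ℝ)) * Complex.I) with hwdef
  set W : ℂ := Complex.exp ((z.arg : ℝ) * Complex.I) with hWdef
  have hw2 : w ^ 2 = W := by
    rw [hwdef, hWdef, sq, ← Complex.exp_add]
    congr 1
    push_cast
    ring
  have hwn : ‖w‖ = 1 := by
    rw [hwdef, Complex.norm_exp_ofReal_mul_I]
  have hWn : ‖W‖ = 1 := by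
    rw [hWdef, Complex.norm_exp_ofReal_mul_I]
  set v : ℂ := 1 + δ / D with hvdef
  have hquot : ‖δ / D‖ ≤ 9 / 16 := by
    rw [norm_div, div_le_iff₀ hDpos]
    linarith
  have hvre : (7 : ℝ) / 16 ≤ v.re := by
    have h1 : |(δ / D).re| ≤ ‖δ / D‖ := Complex.abs_re_le_norm _
    have h2 : v.re = 1 + (δ / D).re := by
      rw [hvdef, Complex.add_re, Complex.one_re]
    rw [h2]
    have := abs_le.mp h1
    linarith
  have hvnv : (7 : ℝ) / 16 ≤ ‖v‖ := by
    have h2 : v - δ / D = 1 := by rw [hvdef]; ring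
    have h1 := norm_sub_le v (δ / D)
    rw [h2, norm_one] at h1
    linarith
  have hvim : |v.im| ≤ ‖δ‖ / ‖D‖ := by
    have h2 : v.im = (δ / D).im := by
      rw [hvdef, Complex.add_im, Complex.one_im]; ring
    rw [h2, ← norm_div]
    exact Complex.abs_im_le_norm _
  have hvpos : (0 : ℝ) < ‖v‖ := lt_of_lt_of_le (by norm_num) hvnv
  have hvD : v * D = D + δ := by rw [hvdef]; field_simp
  have hzd : D = z * d := by rw [hzdef]; field_simp
  have hzW : ((‖z‖ : ℝ) : ℂ) * W = z := by
    rw [hWdef]; exact Complex.norm_mul_exp_arg_mul_I z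
  have h1 : c ^ 2 * (ν : ℂ) = v * ((‖z‖ : ℝ) : ℂ) * W := by
    apply mul_right_cancel₀ hd0
    calc c ^ 2 * (ν : ℂ) * d = D + δ := hmain
      _ = v * D := hvD.symm
      _ = v * (z * d) := by rw [← hzd]
      _ = v * (((‖z‖ : ℝ) : ℂ) * W) * d := by rw [hzW]; ring
      _ = v * ((‖z‖ : ℝ) : ℂ) * W * d := by ring
  have h2 : ν = ‖v‖ * ‖z‖ := by
    have h := congrArg norm h1
    rw [norm_mul, norm_mul, norm_mul, norm_pow, hc, hWn] at h
    simp only [Complex.norm_real] at h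
    rw [Real.norm_of_nonneg hνpos.le, Real.norm_of_nonneg (norm_nonneg z)] at h
    simpa using h
  have habsz : (0 : ℝ) < ‖z‖ := norm_pos_iff.mpr hz0
  have hnv0 : ((‖v‖ : ℝ) : ℂ) ≠ 0 := by exact_mod_cast hvpos.ne'
  have habsz0 : ((‖z‖ : ℝ) : ℂ) ≠ 0 := by exact_mod_cast habsz.ne'
  have hcast : (ν : ℂ) = ((‖v‖ : ℝ) : ℂ) * ((‖z‖ : ℝ) : ℂ) := by
    exact_mod_cast congrArg (fun x : ℝ => (x : ℂ)) h2
  have hcw2 : c ^ 2 = v / (‖v‖ : ℝ) * W := by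
    have h3 : c ^ 2 * ((‖v‖ : ℝ) : ℂ) * ((‖z‖ : ℝ) : ℂ)
        = v * ((‖z‖ : ℝ) : ℂ) * W := by
      rw [mul_assoc, ← hcast]; exact h1
    have h4 : c ^ 2 * ((‖v‖ : ℝ) : ℂ) = v * W :=
      mul_right_cancel₀ habsz0 (by linear_combination h3)
    rw [div_mul_eq_mul_div, eq_div_iff hnv0]
    linear_combination h4
  have hXeq : c ^ 2 - W = (v / (‖v‖ : ℝ) - 1) * W := by
    rw [hcw2]; ring
  have hX : ‖c ^ 2 - W‖ ≤ (‖δ‖ / ‖D‖) / (7 / 16) := by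
    have hkey := unitize_close v (7 / 16) (‖δ‖ / ‖D‖) (by norm_num) hvre hvnv hvim
    calc ‖c ^ 2 - W‖ = ‖(v / (‖v‖ : ℝ) - 1) * W‖ := by rw [hXeq]
      _ = ‖v / (‖v‖ : ℝ) - 1‖ := by rw [norm_mul, hWn, mul_one]
      _ ≤ (‖δ‖ / ‖D‖) / (7 / 16) := hkey
  have hX167 : ‖c ^ 2 - W‖ ≤ (16 / 7) * (‖δ‖ / ‖D‖) := by
    calc ‖c ^ 2 - W‖ ≤ (‖δ‖ / ‖D‖) / (7 / 16) := hX
      _ = (16 / 7) * (‖δ‖ / ‖D‖) := by ring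
  have hcsq : c.re ^ 2 + c.im ^ 2 = 1 := by
    have := Complex.sq_norm c
    rw [hc, Complex.normSq_apply] at this
    nlinarith [this]
  have hwsq : w.re ^ 2 + w.im ^ 2 = 1 := by
    have := Complex.sq_norm w
    rw [hwn, Complex.normSq_apply] at this
    nlinarith [this]
  have hpar : ‖c - w‖ ^ 2 + ‖c + w‖ ^ 2 = 4 := by
    rw [Complex.sq_norm, Complex.sq_norm,
      Complex.normSq_apply, Complex.normSq_apply]
    simp only [Complex.sub_re, Complex.sub_im, Complex.add_re, Complex.add_im]
    nlinarith [hcsq, hwsq]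
  have hfac : ‖c - w‖ * ‖c + w‖ = ‖c ^ 2 - W‖ := by
    rw [← norm_mul, ← hw2]
    congr 1
    ring
  have hXR : (‖c - w‖ * ‖c + w‖) ^ 2 ≤ 2 * R ^ 2 := by
    rw [hfac]
    have hX0 : 0 ≤ ‖c ^ 2 - W‖ := norm_nonneg _
    have hXsq : ‖c ^ 2 - W‖ ^ 2 ≤ ((16 / 7) * (‖δ‖ / ‖D‖)) ^ 2 :=
      pow_le_pow_left₀ hX0 hX167 2
    have hD2 : (0:ℝ) < ‖D‖ ^ 2 := by positivity
    calc ‖c ^ 2 - W‖ ^ 2 ≤ ((16 / 7) * (‖δ‖ / ‖D‖)) ^ 2 := hXsq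
      _ = (256 / 49) * ‖δ‖ ^ 2 / ‖D‖ ^ 2 := by ring
      _ ≤ 2 * (R * ‖D‖) ^ 2 / ‖D‖ ^ 2 := by
          exact div_le_div_of_nonneg_right hRδ hD2.le
      _ = 2 * R ^ 2 := by
          have habsD : ‖D‖ ≠ 0 := by
            simpa using hDpos.ne'
          field_simp [habsD]
  rcases le_total ‖c - w‖ ‖c + w‖ with hle | hle
  · refine ⟨1, Or.inl rfl, ?_⟩
    rw [one_mul]
    exact min_factor _ _ R (norm_nonneg _) hpar hle hXR hR0
  · refine ⟨-1, Or.inr rfl, ?_⟩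
    have hneg : c - (-1) * w = c + w := by ring
    rw [hneg]
    have hpar' : ‖c + w‖ ^ 2 + ‖c - w‖ ^ 2 = 4 := by linarith
    have hXR' : (‖c + w‖ * ‖c - w‖) ^ 2 ≤ 2 * R ^ 2 := by
      rw [mul_comm]; exact hXR
    exact min_factor _ _ R (norm_nonneg _) hpar' hle hXR' hR0


/-- Let `Ã, A, P` be invertible `2×2` complex matrices, `|c| = 1` and
`c·P*AP = Ã + E` with `‖E‖ ≤ |det Ã|/(8‖Ã‖+4)`. With `Δ = arg(det Ã / det A)` there is a
sign `ε ∈ {1, −1}` with `|c − ε·e^{iΔ/2}| ≤ ‖E‖·(8‖Ã‖+4)/|det Ã|`. -/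
theorem scalar_estimate_of_perturbed_conjugation
    (A A' P E : Matrix (Fin 2) (Fin 2) ℂ) (c : ℂ)
    (hA : IsUnit A) (hA' : IsUnit A') (hP : IsUnit P) (hc : ‖c‖ = 1)
    (heq : c • (Pᴴ * A * P) = A' + E)
    (hE : maxNorm E ≤ ‖A'.det‖ / (8 * maxNorm A' + 4)) :
    ∃ ε : ℂ, (ε = 1 ∨ ε = -1) ∧
      ‖c - ε * Complex.exp (((A'.det / A.det).arg / 2 : ℝ) * Complex.I)‖ ≤
        maxNorm E * (8 * maxNorm A' + 4) / ‖A'.det‖ := by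
  set M : ℝ := maxNorm A' with hM
  set η : ℝ := maxNorm E with hη
  set K : ℝ := 8 * M + 4 with hK
  have hM0 : 0 ≤ M := maxNorm_nonneg A'
  have hη0 : 0 ≤ η := maxNorm_nonneg E
  have hKpos : 0 < K := by rw [hK]; positivity
  have hd0 : A.det ≠ 0 := ((Matrix.isUnit_iff_isUnit_det A).mp hA).ne_zero
  have hD0 : A'.det ≠ 0 := ((Matrix.isUnit_iff_isUnit_det A').mp hA').ne_zero
  have hp0 : P.det ≠ 0 := ((Matrix.isUnit_iff_isUnit_det P).mp hP).ne_zero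
  have hDpos : 0 < ‖A'.det‖ := norm_pos_iff.mpr hD0
  have hA'e : ∀ i j, ‖A' i j‖ ≤ M := fun i j => maxNorm_entry A' i j
  have hEe : ∀ i j, ‖E i j‖ ≤ η := fun i j => maxNorm_entry E i j
  have hDle : ‖A'.det‖ ≤ 2 * M ^ 2 := by
    rw [Matrix.det_fin_two]
    calc ‖A' 0 0 * A' 1 1 - A' 0 1 * A' 1 0‖
        ≤ ‖A' 0 0 * A' 1 1‖ + ‖A' 0 1 * A' 1 0‖ := norm_sub_le _ _
      _ = ‖A' 0 0‖ * ‖A' 1 1‖ + ‖A' 0 1‖ * ‖A' 1 0‖ := by rw [norm_mul, norm_mul]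
      _ ≤ M * M + M * M := by
          gcongr <;> first | exact hA'e _ _ | exact norm_nonneg _ |
            exact (norm_nonneg _).trans (hA'e _ _)
      _ = 2 * M ^ 2 := by ring
  have hMpos : 0 < M := by nlinarith
  have hηK : η * K ≤ ‖A'.det‖ := by
    rw [div_eq_mul_inv] at hE
    calc η * K ≤ (‖A'.det‖ * K⁻¹) * K := mul_le_mul_of_nonneg_right hE hKpos.le
      _ = ‖A'.det‖ := by field_simp
  have hη4 : η ≤ M / 4 := by nlinarith
  set δ : ℂ := (A' + E).det - A'.det with hδdef
  have hδeq : δ = A' 0 0 * E 1 1 + E 0 0 * A' 1 1 + E 0 0 * E 1 1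
      - A' 0 1 * E 1 0 - E 0 1 * A' 1 0 - E 0 1 * E 1 0 := by
    rw [hδdef]; simp [Matrix.det_fin_two, Matrix.add_apply]; ring
  have hδle : ‖δ‖ ≤ 4 * (M * η) + 2 * (η * η) := by
    rw [hδeq]
    have t1 : ‖A' 0 0 * E 1 1‖ ≤ M * η := by
      rw [norm_mul]; exact mul_le_mul (hA'e 0 0) (hEe 1 1) (norm_nonneg _) hM0
    have t2 : ‖E 0 0 * A' 1 1‖ ≤ M * η := by
      rw [norm_mul, mul_comm]
      exact mul_le_mul (hA'e 1 1) (hEe 0 0) (norm_nonneg _) hM0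
    have t3 : ‖E 0 0 * E 1 1‖ ≤ η * η := by
      rw [norm_mul]; exact mul_le_mul (hEe 0 0) (hEe 1 1) (norm_nonneg _) hη0
    have t4 : ‖A' 0 1 * E 1 0‖ ≤ M * η := by
      rw [norm_mul]; exact mul_le_mul (hA'e 0 1) (hEe 1 0) (norm_nonneg _) hM0
    have t5 : ‖E 0 1 * A' 1 0‖ ≤ M * η := by
      rw [norm_mul, mul_comm]
      exact mul_le_mul (hA'e 1 0) (hEe 0 1) (norm_nonneg _) hM0
    have t6 : ‖E 0 1 * E 1 0‖ ≤ η * η := by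
      rw [norm_mul]; exact mul_le_mul (hEe 0 1) (hEe 1 0) (norm_nonneg _) hη0
    calc ‖A' 0 0 * E 1 1 + E 0 0 * A' 1 1 + E 0 0 * E 1 1
          - A' 0 1 * E 1 0 - E 0 1 * A' 1 0 - E 0 1 * E 1 0‖
        ≤ ‖A' 0 0 * E 1 1 + E 0 0 * A' 1 1 + E 0 0 * E 1 1
          - A' 0 1 * E 1 0 - E 0 1 * A' 1 0‖ + ‖E 0 1 * E 1 0‖ := norm_sub_le _ _
      _ ≤ (‖A' 0 0 * E 1 1 + E 0 0 * A' 1 1 + E 0 0 * E 1 1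
          - A' 0 1 * E 1 0‖ + ‖E 0 1 * A' 1 0‖) + ‖E 0 1 * E 1 0‖ := by
            gcongr; exact norm_sub_le _ _
      _ ≤ ((‖A' 0 0 * E 1 1 + E 0 0 * A' 1 1 + E 0 0 * E 1 1‖
          + ‖A' 0 1 * E 1 0‖) + ‖E 0 1 * A' 1 0‖) + ‖E 0 1 * E 1 0‖ := by
            gcongr; exact norm_sub_le _ _
      _ ≤ (((‖A' 0 0 * E 1 1 + E 0 0 * A' 1 1‖ + ‖E 0 0 * E 1 1‖)
          + ‖A' 0 1 * E 1 0‖) + ‖E 0 1 * A' 1 0‖) + ‖E 0 1 * E 1 0‖ := by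
            gcongr; exact norm_add_le _ _
      _ ≤ ((((‖A' 0 0 * E 1 1‖ + ‖E 0 0 * A' 1 1‖) + ‖E 0 0 * E 1 1‖)
          + ‖A' 0 1 * E 1 0‖) + ‖E 0 1 * A' 1 0‖) + ‖E 0 1 * E 1 0‖ := by
            gcongr; exact norm_add_le _ _
      _ ≤ 4 * (M * η) + 2 * (η * η) := by linarith
  have hδ45 : ‖δ‖ ≤ (9 / 2) * (M * η) := by nlinarith
  have hτ : ‖δ‖ ≤ (9 / 16) * ‖A'.det‖ := by nlinarith
  have hdet := congrArg Matrix.det heq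
  simp only [Matrix.det_smul, Matrix.det_mul, Matrix.det_conjTranspose,
    Fintype.card_fin] at hdet
  set ν : ℝ := Complex.normSq P.det with hνdef
  have hνpos : 0 < ν := Complex.normSq_pos.mpr hp0
  have hν : (ν : ℂ) = star P.det * P.det := by
    rw [hνdef, Complex.normSq_eq_conj_mul_self]; rfl
  have hmain : c ^ 2 * (ν : ℂ) * A.det = A'.det + δ := by
    rw [hν, hδdef]
    linear_combination hdet
  set R : ℝ := η * K / ‖A'.det‖ with hRdef
  have hR0 : 0 ≤ R := by rw [hRdef]; positivity
  have hRD : R * ‖A'.det‖ = η * K := by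
    rw [hRdef]; exact div_mul_cancel₀ _ hDpos.ne'
  have hRδ : (256 / 49) * ‖δ‖ ^ 2 ≤ 2 * (R * ‖A'.det‖) ^ 2 := by
    rw [hRD, hK]
    nlinarith [mul_self_le_mul_self (norm_nonneg δ) hδ45, sq_nonneg (M * η),
      mul_nonneg hM0 hη0, sq_nonneg η, hM0, hη0,
      mul_nonneg (mul_nonneg hM0 hη0) hη0, mul_nonneg (sq_nonneg η) hM0]
  exact scalar_core c A.det A'.det δ ν hνpos hc hd0 hD0 hmain hτ R hR0 hRδ
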